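/- arXiv:1804.06706 — 3 statements merged into one kernel-verified Lean document; each statement's English description precedes it below -/
import Mathlib

section
/- Let θ₀ > 0, k ∈ ℕ (k ≥ 0), ε ∈ {−1, 1}, and set μ := kπ/θ₀. Define v_x(θ) := cos(μθ) and v_θ(θ) := ε·sin(μθ). Then for every θ ∈ [0, θ₀]: v_x''(θ) − v_x(θ) − 2·v_θ'(θ) = −(μ + ε)²·v_x(θ) and v_θ''(θ) − v_θ(θ) + 2·v_x'(θ) = −(μ + ε)²·v_θ(θ); moreover the boundary conditions v_x'(0) = v_x'(θ₀) = 0 and v_θ(0) = v_θ(θ₀) = 0 hold. In other words, (v_x, v_θ) is an eigenfunction of the operator (v_x, v_θ) ↦ (v_x'' − v_x − 2v_θ', v_θ'' − v_θ + 2v_x') with mixed Neumann/Dirichlet boundary conditions, with eigenvalue −(kπ/θ₀ + ε)². -/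
open Real Set

lemma dcos_aux (μ : ℝ) :
    deriv (fun t => Real.cos (μ * t)) = fun θ => -μ * Real.sin (μ * θ) := by
  funext θ
  have hmul : HasDerivAt (fun t : ℝ => μ * t) μ θ := by
    simpa using (hasDerivAt_id θ).const_mul μ
  have h : HasDerivAt (fun t => Real.cos (μ * t)) (-Real.sin (μ * θ) * μ) θ :=
    (Real.hasDerivAt_cos (μ * θ)).comp θ hmul
  rw [h.deriv]; ring

lemma dsin_aux (μ ε : ℝ) :
    deriv (fun t => ε * Real.sin (μ * t)) = fun θ => ε * μ * Real.cos (μ * θ) := by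
  funext θ
  have hmul : HasDerivAt (fun t : ℝ => μ * t) μ θ := by
    simpa using (hasDerivAt_id θ).const_mul μ
  have h : HasDerivAt (fun t => Real.sin (μ * t)) (Real.cos (μ * θ) * μ) θ :=
    (Real.hasDerivAt_sin (μ * θ)).comp θ hmul
  rw [deriv_const_mul _ h.differentiableAt, h.deriv]; ring

lemma ddcos_aux (μ : ℝ) (θ : ℝ) :
    deriv (deriv (fun t => Real.cos (μ * t))) θ = -μ ^ 2 * Real.cos (μ * θ) := by
  rw [dcos_aux]
  have := dsin_aux μ (-μ)
  rw [this]; ring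

lemma ddsin_aux (μ ε : ℝ) (θ : ℝ) :
    deriv (deriv (fun t => ε * Real.sin (μ * t))) θ = -ε * μ ^ 2 * Real.sin (μ * θ) := by
  rw [dsin_aux]
  have := dcos_aux μ
  have h2 : (fun θ => ε * μ * Real.cos (μ * θ)) = fun θ => ε * μ * ((fun t => Real.cos (μ * t)) θ) := rfl
  rw [h2]
  rw [deriv_const_mul]
  · rw [dcos_aux]; ring
  · have hmul : HasDerivAt (fun t : ℝ => μ * t) μ θ := by
      simpa using (hasDerivAt_id θ).const_mul μ
    exact ((Real.hasDerivAt_cos (μ * θ)).comp θ hmul).differentiableAt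

/-- The pairs `(cos(kπθ/θ₀), ±sin(kπθ/θ₀))` are eigenfunctions of the transformed angular
operator `(v_x, v_θ) ↦ (v_x'' − v_x − 2v_θ', v_θ'' − v_θ + 2v_x')` with mixed
Neumann/Dirichlet boundary conditions, with eigenvalue `−(kπ/θ₀ ± 1)²`. -/
theorem stmt4 (θ₀ : ℝ) (hθ₀ : 0 < θ₀) (k : ℕ) (ε : ℝ) (hε : ε = 1 ∨ ε = -1) :
    (∀ θ ∈ Set.Icc 0 θ₀,
      deriv (deriv (fun t => Real.cos (k * π / θ₀ * t))) θ
          - Real.cos (k * π / θ₀ * θ)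
          - 2 * deriv (fun t => ε * Real.sin (k * π / θ₀ * t)) θ =
        -(k * π / θ₀ + ε) ^ 2 * Real.cos (k * π / θ₀ * θ) ∧
      deriv (deriv (fun t => ε * Real.sin (k * π / θ₀ * t))) θ
          - ε * Real.sin (k * π / θ₀ * θ)
          + 2 * deriv (fun t => Real.cos (k * π / θ₀ * t)) θ =
        -(k * π / θ₀ + ε) ^ 2 * (ε * Real.sin (k * π / θ₀ * θ))) ∧
    deriv (fun t => Real.cos (k * π / θ₀ * t)) 0 = 0 ∧
    deriv (fun t => Real.cos (k * π / θ₀ * t)) θ₀ = 0 ∧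
    ε * Real.sin (k * π / θ₀ * 0) = 0 ∧
    ε * Real.sin (k * π / θ₀ * θ₀) = 0 := by
  set μ := (k : ℝ) * π / θ₀ with hμ
  have hε2 : ε ^ 2 = 1 := by rcases hε with h | h <;> simp [h]
  have hsin0 : Real.sin (μ * θ₀) = 0 := by
    have : μ * θ₀ = k * π := by rw [hμ, div_mul_cancel₀ _ hθ₀.ne']
    rw [this]; exact Real.sin_nat_mul_pi k
  refine ⟨fun θ _ => ⟨?_, ?_⟩, ?_, ?_, ?_, ?_⟩
  · rw [ddcos_aux, dsin_aux]; simp only []; linear_combination Real.cos (μ * θ) * hε2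
  · rw [ddsin_aux, dcos_aux]; simp only []; linear_combination (Real.sin (μ * θ) * (2 * μ + ε)) * hε2
  · rw [dcos_aux]; simp
  · rw [dcos_aux]; simp only []; rw [hsin0]; ring
  · simp
  · rw [hsin0]; ring
end

section
/- Let θ₀ ∈ (0, π), β ∈ ℝ, and let v = (v_x, v_θ) : ℝ×(0,θ₀) → ℝ² be twice continuously differentiable. Define u : G → ℝ² by u(ψ(x, θ)) := e^{βx}·O(θ)·(v_x(x,θ), v_θ(x,θ)). Then u is twice continuously differentiable on G and for all (x, θ) ∈ ℝ×(0,θ₀): (Δu)(ψ(x, θ)) = e^{(β−2)x}·O(θ)·(w_x(x,θ), w_θ(x,θ)), where Δ acts componentwise as ∂₁² + ∂₂², w_x = ∂_x²v_x + 2β∂_x v_x + β²v_x + ∂_θ²v_x − v_x − 2∂_θ v_θ, and w_θ = ∂_x²v_θ + 2β∂_x v_θ + β²v_θ + ∂_θ²v_θ − v_θ + 2∂_θ v_x. -/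
open Real Set

/-- The Euler/polar transform `ψ(x, θ) = (eˣ cos θ, eˣ sin θ)`. -/
noncomputable def psiW (q : ℝ × ℝ) : ℝ × ℝ :=
  (Real.exp q.1 * Real.cos q.2, Real.exp q.1 * Real.sin q.2)

/-- The planar wedge of opening angle `θ₀`. -/
def wedge (θ₀ : ℝ) : Set (ℝ × ℝ) :=
  {y | ∃ r θ : ℝ, 0 < r ∧ 0 < θ ∧ θ < θ₀ ∧ y = (r * Real.cos θ, r * Real.sin θ)}

/-- The layer `ℝ × (0, θ₀)`. -/
def layer (θ₀ : ℝ) : Set (ℝ × ℝ) := Set.univ ×ˢ Set.Ioo 0 θ₀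

/-- The rotation matrix `O(θ)` with rows `(cos θ, −sin θ)` and `(sin θ, cos θ)`. -/
noncomputable def Orot (θ : ℝ) (v : ℝ × ℝ) : ℝ × ℝ :=
  (Real.cos θ * v.1 - Real.sin θ * v.2, Real.sin θ * v.1 + Real.cos θ * v.2)

/-- Partial derivative in the first variable. -/
noncomputable def pd1 (f : ℝ × ℝ → ℝ) (q : ℝ × ℝ) : ℝ := fderiv ℝ f q (1, 0)

/-- Partial derivative in the second variable. -/
noncomputable def pd2 (f : ℝ × ℝ → ℝ) (q : ℝ × ℝ) : ℝ := fderiv ℝ f q (0, 1)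

/-- The componentwise Laplacian `Δ = ∂₁² + ∂₂²` of a planar vector field. -/
noncomputable def lap2 (f : ℝ × ℝ → ℝ × ℝ) (y : ℝ × ℝ) : ℝ × ℝ :=
  fderiv ℝ (fun z => fderiv ℝ f z (1, 0)) y (1, 0) +
    fderiv ℝ (fun z => fderiv ℝ f z (0, 1)) y (0, 1)

/-! ### Auxiliary machinery -/

/-- Inverse of the Euler/polar transform on the upper half plane. -/
noncomputable def gW (y : ℝ × ℝ) : ℝ × ℝ :=
  (Real.log (y.1 ^ 2 + y.2 ^ 2) / 2, π / 2 - Real.arctan (y.1 / y.2))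

/-- A vector field written in rotated components with an exponential weight. -/
noncomputable def G (γ : ℝ) (f g : ℝ × ℝ → ℝ) : ℝ × ℝ → ℝ × ℝ :=
  fun p => (Real.exp (γ * p.1) * f p) • ((Real.cos p.2, Real.sin p.2) : ℝ × ℝ)
    + (Real.exp (γ * p.1) * g p) • ((-Real.sin p.2, Real.cos p.2) : ℝ × ℝ)

noncomputable def Af (β : ℝ) (v : ℝ × ℝ → ℝ) : ℝ × ℝ → ℝ := fun p => β * v p + pd1 v p
noncomputable def Bf (v w : ℝ × ℝ → ℝ) : ℝ × ℝ → ℝ := fun p => pd2 v p - w p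
noncomputable def Cf (v w : ℝ × ℝ → ℝ) : ℝ × ℝ → ℝ := fun p => v p + pd2 w p
noncomputable def M1f (f g : ℝ × ℝ → ℝ) : ℝ × ℝ → ℝ :=
  fun p => Real.cos p.2 * f p - Real.sin p.2 * g p
noncomputable def M2f (f g : ℝ × ℝ → ℝ) : ℝ × ℝ → ℝ :=
  fun p => Real.sin p.2 * f p + Real.cos p.2 * g p

lemma isOpen_layer (θ₀ : ℝ) : IsOpen (layer θ₀) := isOpen_univ.prod isOpen_Ioo

lemma psi_mem_wedge {θ₀ : ℝ} {q : ℝ × ℝ} (hq : q ∈ layer θ₀) : psiW q ∈ wedge θ₀ := by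
  obtain ⟨-, h2, h3⟩ := hq
  exact ⟨Real.exp q.1, q.2, Real.exp_pos _, h2, h3, rfl⟩

lemma g_psi {θ₀ : ℝ} (hπ : θ₀ < π) {q : ℝ × ℝ} (hq : q ∈ layer θ₀) : gW (psiW q) = q := by
  obtain ⟨-, h2, h3⟩ := hq
  have hθπ : q.2 < π := h3.trans hπ
  have hpy := Real.sin_sq_add_cos_sq q.2
  have h1 : (Real.exp q.1 * Real.cos q.2) ^ 2 + (Real.exp q.1 * Real.sin q.2) ^ 2
      = Real.exp q.1 ^ 2 := by nlinarith
  have harc : Real.arctan (Real.exp q.1 * Real.cos q.2 / (Real.exp q.1 * Real.sin q.2))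
      = π / 2 - q.2 := by
    rw [mul_div_mul_left _ _ (Real.exp_ne_zero _)]
    have ht : Real.cos q.2 / Real.sin q.2 = Real.tan (π / 2 - q.2) := by
      rw [Real.tan_pi_div_two_sub, Real.tan_eq_sin_div_cos, inv_div]
    rw [ht, Real.arctan_tan (by linarith) (by linarith)]
  have hlog : Real.log (Real.exp q.1 ^ 2) / 2 = q.1 := by
    rw [Real.log_pow, Real.log_exp]; push_cast; ring
  simp only [gW, psiW, h1, harc, hlog]
  ext <;> simp

lemma psi_g {y : ℝ × ℝ} (hy : 0 < y.2) : psiW (gW y) = y := by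
  have hR2 : (0:ℝ) < y.1 ^ 2 + y.2 ^ 2 := by positivity
  have hy2 : y.2 ≠ 0 := ne_of_gt hy
  have hexp : Real.exp (Real.log (y.1 ^ 2 + y.2 ^ 2) / 2) = Real.sqrt (y.1 ^ 2 + y.2 ^ 2) := by
    rw [← Real.log_sqrt hR2.le, Real.exp_log (Real.sqrt_pos.mpr hR2)]
  have hq : 1 + (y.1 / y.2) ^ 2 = (y.1 ^ 2 + y.2 ^ 2) / y.2 ^ 2 := by field_simp; ring
  have hsq : Real.sqrt (1 + (y.1 / y.2) ^ 2) = Real.sqrt (y.1 ^ 2 + y.2 ^ 2) / y.2 := by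
    rw [hq, Real.sqrt_div hR2.le, Real.sqrt_sq hy.le]
  have hRpos : (0:ℝ) < Real.sqrt (y.1 ^ 2 + y.2 ^ 2) := Real.sqrt_pos.mpr hR2
  have h1 : Real.cos (π / 2 - Real.arctan (y.1 / y.2))
      = y.1 / y.2 / (Real.sqrt (y.1 ^ 2 + y.2 ^ 2) / y.2) := by
    rw [Real.cos_pi_div_two_sub, Real.sin_arctan, hsq]
  have h2 : Real.sin (π / 2 - Real.arctan (y.1 / y.2))
      = 1 / (Real.sqrt (y.1 ^ 2 + y.2 ^ 2) / y.2) := by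
    rw [Real.sin_pi_div_two_sub, Real.cos_arctan, hsq]
  have hsqsq : Real.sqrt (y.1 ^ 2 + y.2 ^ 2) ^ 2 = y.1 ^ 2 + y.2 ^ 2 := Real.sq_sqrt hR2.le
  simp only [psiW, gW, hexp, h1, h2]
  ext <;> simp <;> field_simp

lemma wedge_pos2 {θ₀ : ℝ} (hπ : θ₀ < π) {y : ℝ × ℝ} (hy : y ∈ wedge θ₀) : 0 < y.2 := by
  obtain ⟨r, θ, hr, h1, h2, rfl⟩ := hy
  exact mul_pos hr (Real.sin_pos_of_pos_of_lt_pi h1 (h2.trans hπ))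

lemma wedge_g_layer {θ₀ : ℝ} (hπ : θ₀ < π) {y : ℝ × ℝ} (hy : y ∈ wedge θ₀) :
    gW y ∈ layer θ₀ := by
  obtain ⟨r, θ, hr, h1, h2, rfl⟩ := hy
  have hq : ((Real.log r, θ) : ℝ × ℝ) ∈ layer θ₀ := ⟨trivial, h1, h2⟩
  have : ((r * Real.cos θ, r * Real.sin θ) : ℝ × ℝ) = psiW (Real.log r, θ) := by
    simp [psiW, Real.exp_log hr]
  rw [this, g_psi hπ hq]
  exact hq

lemma contDiffAt_gW {y : ℝ × ℝ} (hy : 0 < y.2) : ContDiffAt ℝ 2 gW y := by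
  have hR2 : (0:ℝ) < y.1 ^ 2 + y.2 ^ 2 := by positivity
  apply ContDiffAt.prodMk
  · exact ((Real.contDiffAt_log.mpr hR2.ne').comp y
      (((contDiff_fst.pow 2).add (contDiff_snd.pow 2)).contDiffAt)).div_const 2
  · exact contDiffAt_const.sub ((Real.contDiff_arctan.contDiffAt).comp y
      (contDiffAt_fst.div contDiffAt_snd hy.ne'))

lemma isOpen_wedge {θ₀ : ℝ} (hπ : θ₀ < π) : IsOpen (wedge θ₀) := by
  have hw : wedge θ₀ = {y : ℝ × ℝ | 0 < y.2} ∩ gW ⁻¹' (layer θ₀) := by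
    ext y
    constructor
    · exact fun hy => ⟨wedge_pos2 hπ hy, wedge_g_layer hπ hy⟩
    · rintro ⟨h1, h2⟩
      rw [← psi_g h1]
      exact psi_mem_wedge h2
  rw [hw]
  exact ContinuousOn.isOpen_inter_preimage
    (fun y hy => ((contDiffAt_gW hy).continuousAt).continuousWithinAt)
    (isOpen_lt continuous_const continuous_snd) (isOpen_layer θ₀)

lemma contDiffOn_G {θ₀ γ : ℝ} {f g : ℝ × ℝ → ℝ} (hf : ContDiffOn ℝ 2 f (layer θ₀))
    (hg : ContDiffOn ℝ 2 g (layer θ₀)) : ContDiffOn ℝ 2 (G γ f g) (layer θ₀) := by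
  have he : ContDiff ℝ 2 (fun p : ℝ × ℝ => Real.exp (γ * p.1)) :=
    Real.contDiff_exp.comp (contDiff_const.mul contDiff_fst)
  have hc : ContDiff ℝ 2 (fun p : ℝ × ℝ => ((Real.cos p.2, Real.sin p.2) : ℝ × ℝ)) :=
    (Real.contDiff_cos.comp contDiff_snd).prodMk (Real.contDiff_sin.comp contDiff_snd)
  have hs : ContDiff ℝ 2 (fun p : ℝ × ℝ => ((-Real.sin p.2, Real.cos p.2) : ℝ × ℝ)) :=
    ((Real.contDiff_sin.comp contDiff_snd).neg).prodMk (Real.contDiff_cos.comp contDiff_snd)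
  exact ((he.contDiffOn.mul hf).smul hc.contDiffOn).add
    ((he.contDiffOn.mul hg).smul hs.contDiffOn)

lemma Orot_G (β : ℝ) (f g : ℝ × ℝ → ℝ) (p : ℝ × ℝ) :
    Real.exp (β * p.1) • Orot p.2 (f p, g p) = G β f g p := by
  simp [G, Orot, Prod.ext_iff, Prod.smul_def]
  constructor <;> ring

section DiffHelpers

variable {F : Type*} [NormedAddCommGroup F] [NormedSpace ℝ F]

lemma diffAt_of_c2 {s : Set (ℝ × ℝ)} (hs : IsOpen s) {f : ℝ × ℝ → F}
    (hf : ContDiffOn ℝ 2 f s) {q : ℝ × ℝ} (hq : q ∈ s) : DifferentiableAt ℝ f q :=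
  (hf.contDiffAt (hs.mem_nhds hq)).differentiableAt (by norm_num)

lemma diff_fderiv_apply {s : Set (ℝ × ℝ)} (hs : IsOpen s) {f : ℝ × ℝ → F}
    (hf : ContDiffOn ℝ 2 f s) {q : ℝ × ℝ} (hq : q ∈ s) (w : ℝ × ℝ) :
    DifferentiableAt ℝ (fun p => fderiv ℝ f p w) q := by
  have h1 : ContDiffOn ℝ 1 (fderiv ℝ f) s := hf.fderiv_of_isOpen hs (by norm_num)
  have h2 : ContDiffOn ℝ 1 (fun p => fderiv ℝ f p w) s := h1.clm_apply contDiffOn_const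
  exact (h2.contDiffAt (hs.mem_nhds hq)).differentiableAt one_ne_zero

end DiffHelpers

lemma hexpD (γ : ℝ) (q : ℝ × ℝ) :
    HasFDerivAt (fun p : ℝ × ℝ => Real.exp (γ * p.1))
      (Real.exp (γ * q.1) • (γ • ContinuousLinearMap.fst ℝ ℝ ℝ)) q := by
  have h1 : HasFDerivAt (fun p : ℝ × ℝ => γ * p.1) (γ • ContinuousLinearMap.fst ℝ ℝ ℝ) q :=
    (hasFDerivAt_fst).const_mul γ
  exact (Real.hasDerivAt_exp (γ * q.1)).comp_hasFDerivAt q h1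

lemma hexpD1 (q : ℝ × ℝ) :
    HasFDerivAt (fun p : ℝ × ℝ => Real.exp p.1)
      (Real.exp q.1 • ContinuousLinearMap.fst ℝ ℝ ℝ) q :=
  (Real.hasDerivAt_exp q.1).comp_hasFDerivAt q hasFDerivAt_fst

lemma hcosD (q : ℝ × ℝ) :
    HasFDerivAt (fun p : ℝ × ℝ => Real.cos p.2)
      ((-Real.sin q.2) • ContinuousLinearMap.snd ℝ ℝ ℝ) q :=
  (Real.hasDerivAt_cos q.2).comp_hasFDerivAt q hasFDerivAt_snd

lemma hsinD (q : ℝ × ℝ) :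
    HasFDerivAt (fun p : ℝ × ℝ => Real.sin p.2)
      ((Real.cos q.2) • ContinuousLinearMap.snd ℝ ℝ ℝ) q :=
  (Real.hasDerivAt_sin q.2).comp_hasFDerivAt q hasFDerivAt_snd

lemma Gd (γ : ℝ) (f g : ℝ × ℝ → ℝ) (q : ℝ × ℝ)
    (hf : DifferentiableAt ℝ f q) (hg : DifferentiableAt ℝ g q) :
    DifferentiableAt ℝ (G γ f g) q ∧
    fderiv ℝ (G γ f g) q (1, 0) =
      (Real.exp (γ * q.1) * (γ * f q + pd1 f q)) • ((Real.cos q.2, Real.sin q.2) : ℝ × ℝ)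
        + (Real.exp (γ * q.1) * (γ * g q + pd1 g q)) • ((-Real.sin q.2, Real.cos q.2) : ℝ × ℝ) ∧
    fderiv ℝ (G γ f g) q (0, 1) =
      (Real.exp (γ * q.1) * (pd2 f q - g q)) • ((Real.cos q.2, Real.sin q.2) : ℝ × ℝ)
        + (Real.exp (γ * q.1) * (f q + pd2 g q)) • ((-Real.sin q.2, Real.cos q.2) : ℝ × ℝ) := by
  have h3 : HasFDerivAt (G γ f g) _ q :=
    (((hexpD γ q).mul hf.hasFDerivAt).smul ((hcosD q).prodMk (hsinD q))).add
      (((hexpD γ q).mul hg.hasFDerivAt).smul (((hsinD q).neg).prodMk (hcosD q)))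
  refine ⟨h3.differentiableAt, ?_, ?_⟩ <;>
  · rw [h3.fderiv]
    simp [pd1, pd2, Prod.ext_iff, Prod.smul_def]
    constructor <;> ring

lemma hasPsiD (q : ℝ × ℝ) : HasFDerivAt psiW
    ((((Real.exp q.1 * Real.cos q.2) • ContinuousLinearMap.fst ℝ ℝ ℝ
        + (Real.exp q.1 * (-Real.sin q.2)) • ContinuousLinearMap.snd ℝ ℝ ℝ)).prod
      ((Real.exp q.1 * Real.sin q.2) • ContinuousLinearMap.fst ℝ ℝ ℝ
        + (Real.exp q.1 * Real.cos q.2) • ContinuousLinearMap.snd ℝ ℝ ℝ)) q := by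
  have h1 := (hexpD1 q).mul (hcosD q)
  have h2 := (hexpD1 q).mul (hsinD q)
  have h3 := h1.prodMk h2
  convert h3 using 2 <;> ext v <;> simp [Prod.ext_iff, psiW] <;> ring

lemma key {h : ℝ × ℝ → ℝ × ℝ} {q : ℝ × ℝ} (hd : DifferentiableAt ℝ h (psiW q)) :
    fderiv ℝ h (psiW q) (1, 0) =
      (Real.exp (-q.1) * Real.cos q.2) • fderiv ℝ (h ∘ psiW) q (1, 0)
        - (Real.exp (-q.1) * Real.sin q.2) • fderiv ℝ (h ∘ psiW) q (0, 1) ∧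
    fderiv ℝ h (psiW q) (0, 1) =
      (Real.exp (-q.1) * Real.sin q.2) • fderiv ℝ (h ∘ psiW) q (1, 0)
        + (Real.exp (-q.1) * Real.cos q.2) • fderiv ℝ (h ∘ psiW) q (0, 1) := by
  have hψ := hasPsiD q
  have hcomp : fderiv ℝ (h ∘ psiW) q = (fderiv ℝ h (psiW q)).comp (fderiv ℝ psiW q) :=
    fderiv_comp q hd hψ.differentiableAt
  rw [hψ.fderiv] at hcomp
  have hee : Real.exp q.1 * Real.exp (-q.1) = 1 := by
    rw [← Real.exp_add]; simp
  have hpy := Real.sin_sq_add_cos_sq q.2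
  constructor
  · have w1 : ((Real.exp (-q.1) * Real.cos q.2) • ((1:ℝ),(0:ℝ))
        - (Real.exp (-q.1) * Real.sin q.2) • ((0:ℝ),(1:ℝ)) : ℝ × ℝ)
        = (Real.exp (-q.1) * Real.cos q.2, -(Real.exp (-q.1) * Real.sin q.2)) := by
      simp [Prod.ext_iff]
    symm
    calc (Real.exp (-q.1) * Real.cos q.2) • fderiv ℝ (h ∘ psiW) q (1, 0)
        - (Real.exp (-q.1) * Real.sin q.2) • fderiv ℝ (h ∘ psiW) q (0, 1)
        = fderiv ℝ (h ∘ psiW) q ((Real.exp (-q.1) * Real.cos q.2) • ((1:ℝ),(0:ℝ))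
            - (Real.exp (-q.1) * Real.sin q.2) • ((0:ℝ),(1:ℝ))) := by
          rw [map_sub, map_smul, map_smul]
      _ = fderiv ℝ h (psiW q) (1, 0) := by
          rw [w1, hcomp]
          simp only [ContinuousLinearMap.comp_apply]
          congr 1
          simp [Prod.ext_iff]
          constructor <;> nlinarith [hee, hpy]
  · have w1 : ((Real.exp (-q.1) * Real.sin q.2) • ((1:ℝ),(0:ℝ))
        + (Real.exp (-q.1) * Real.cos q.2) • ((0:ℝ),(1:ℝ)) : ℝ × ℝ)
        = (Real.exp (-q.1) * Real.sin q.2, Real.exp (-q.1) * Real.cos q.2) := by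
      simp [Prod.ext_iff]
    symm
    calc (Real.exp (-q.1) * Real.sin q.2) • fderiv ℝ (h ∘ psiW) q (1, 0)
        + (Real.exp (-q.1) * Real.cos q.2) • fderiv ℝ (h ∘ psiW) q (0, 1)
        = fderiv ℝ (h ∘ psiW) q ((Real.exp (-q.1) * Real.sin q.2) • ((1:ℝ),(0:ℝ))
            + (Real.exp (-q.1) * Real.cos q.2) • ((0:ℝ),(1:ℝ))) := by
          rw [map_add, map_smul, map_smul]
      _ = fderiv ℝ h (psiW q) (0, 1) := by
          rw [w1, hcomp]
          simp only [ContinuousLinearMap.comp_apply]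
          congr 1
          simp [Prod.ext_iff]
          constructor <;> nlinarith [hee, hpy]

lemma pdAf (β : ℝ) {v : ℝ × ℝ → ℝ} {q : ℝ × ℝ}
    (hv : DifferentiableAt ℝ v q) (h1 : DifferentiableAt ℝ (pd1 v) q) :
    DifferentiableAt ℝ (Af β v) q ∧
    pd1 (Af β v) q = β * pd1 v q + pd1 (pd1 v) q ∧
    pd2 (Af β v) q = β * pd2 v q + pd2 (pd1 v) q := by
  have h := (hv.hasFDerivAt.const_mul β).add h1.hasFDerivAt
  refine ⟨h.differentiableAt, ?_, ?_⟩ <;>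
  · show fderiv ℝ (Af β v) q _ = _
    rw [(show fderiv ℝ (Af β v) q = _ from h.fderiv)]
    simp [pd1, pd2]

lemma pdBf {v w : ℝ × ℝ → ℝ} {q : ℝ × ℝ}
    (h2 : DifferentiableAt ℝ (pd2 v) q) (hw : DifferentiableAt ℝ w q) :
    DifferentiableAt ℝ (Bf v w) q ∧
    pd1 (Bf v w) q = pd1 (pd2 v) q - pd1 w q ∧
    pd2 (Bf v w) q = pd2 (pd2 v) q - pd2 w q := by
  have h := h2.hasFDerivAt.sub hw.hasFDerivAt
  refine ⟨h.differentiableAt, ?_, ?_⟩ <;>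
  · show fderiv ℝ (Bf v w) q _ = _
    rw [(show fderiv ℝ (Bf v w) q = _ from h.fderiv)]
    simp [pd1, pd2]

lemma pdCf {v w : ℝ × ℝ → ℝ} {q : ℝ × ℝ}
    (hv : DifferentiableAt ℝ v q) (h2 : DifferentiableAt ℝ (pd2 w) q) :
    DifferentiableAt ℝ (Cf v w) q ∧
    pd1 (Cf v w) q = pd1 v q + pd1 (pd2 w) q ∧
    pd2 (Cf v w) q = pd2 v q + pd2 (pd2 w) q := by
  have h := hv.hasFDerivAt.add h2.hasFDerivAt
  refine ⟨h.differentiableAt, ?_, ?_⟩ <;>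
  · show fderiv ℝ (Cf v w) q _ = _
    rw [(show fderiv ℝ (Cf v w) q = _ from h.fderiv)]
    simp [pd1, pd2]

lemma pdM1 {f g : ℝ × ℝ → ℝ} {q : ℝ × ℝ}
    (hf : DifferentiableAt ℝ f q) (hg : DifferentiableAt ℝ g q) :
    DifferentiableAt ℝ (M1f f g) q ∧
    pd1 (M1f f g) q = Real.cos q.2 * pd1 f q - Real.sin q.2 * pd1 g q ∧
    pd2 (M1f f g) q = (Real.cos q.2 * pd2 f q - Real.sin q.2 * f q)
        - (Real.sin q.2 * pd2 g q + Real.cos q.2 * g q) := by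
  have h := ((hcosD q).mul hf.hasFDerivAt).sub ((hsinD q).mul hg.hasFDerivAt)
  refine ⟨h.differentiableAt, ?_, ?_⟩ <;>
  · show fderiv ℝ (M1f f g) q _ = _
    rw [(show fderiv ℝ (M1f f g) q = _ from h.fderiv)]
    simp [pd1, pd2]
    try ring

lemma pdM2 {f g : ℝ × ℝ → ℝ} {q : ℝ × ℝ}
    (hf : DifferentiableAt ℝ f q) (hg : DifferentiableAt ℝ g q) :
    DifferentiableAt ℝ (M2f f g) q ∧
    pd1 (M2f f g) q = Real.sin q.2 * pd1 f q + Real.cos q.2 * pd1 g q ∧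
    pd2 (M2f f g) q = (Real.sin q.2 * pd2 f q + Real.cos q.2 * f q)
        + (Real.cos q.2 * pd2 g q - Real.sin q.2 * g q) := by
  have h := ((hsinD q).mul hf.hasFDerivAt).add ((hcosD q).mul hg.hasFDerivAt)
  refine ⟨h.differentiableAt, ?_, ?_⟩ <;>
  · show fderiv ℝ (M2f f g) q _ = _
    rw [(show fderiv ℝ (M2f f g) q = _ from h.fderiv)]
    simp [pd1, pd2]
    try ring

lemma G_M1 (γ : ℝ) (f f' g g' : ℝ × ℝ → ℝ) (p : ℝ × ℝ) :
    (Real.exp (-p.1) * Real.cos p.2) • G γ f f' p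
      - (Real.exp (-p.1) * Real.sin p.2) • G γ g g' p
      = G (γ - 1) (M1f f g) (M1f f' g') p := by
  have he : Real.exp ((γ - 1) * p.1) = Real.exp (-p.1) * Real.exp (γ * p.1) := by
    rw [← Real.exp_add]; ring_nf
  simp [G, M1f, Prod.ext_iff, Prod.smul_def, he]
  constructor <;> ring

lemma G_M2 (γ : ℝ) (f f' g g' : ℝ × ℝ → ℝ) (p : ℝ × ℝ) :
    (Real.exp (-p.1) * Real.sin p.2) • G γ f f' p
      + (Real.exp (-p.1) * Real.cos p.2) • G γ g g' p
      = G (γ - 1) (M2f f g) (M2f f' g') p := by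
  have he : Real.exp ((γ - 1) * p.1) = Real.exp (-p.1) * Real.exp (γ * p.1) := by
    rw [← Real.exp_add]; ring_nf
  simp [G, M2f, Prod.ext_iff, Prod.smul_def, he]
  constructor <;> ring

/-- Transformation of the Laplacian under the combined polar/Euler transform and rotation
of components: `Δu ∘ ψ = e^{(β−2)x} O(θ) (r_β(∂_x) + 𝒯_θ)(v_x, v_θ)` with
`r_β(∂_x) = ∂_x² + 2β ∂_x + β²`. -/
theorem stmt8 (θ₀ β : ℝ) (hθ₀ : θ₀ ∈ Set.Ioo 0 π)
    (vx vθ : ℝ × ℝ → ℝ)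
    (hvx : ContDiffOn ℝ 2 vx (layer θ₀)) (hvθ : ContDiffOn ℝ 2 vθ (layer θ₀))
    (u : ℝ × ℝ → ℝ × ℝ)
    (hu : ∀ q ∈ layer θ₀, u (psiW q) = Real.exp (β * q.1) • Orot q.2 (vx q, vθ q)) :
    ContDiffOn ℝ 2 u (wedge θ₀) ∧
    ∀ q ∈ layer θ₀,
      lap2 u (psiW q) =
        Real.exp ((β - 2) * q.1) • Orot q.2
          (pd1 (pd1 vx) q + 2 * β * pd1 vx q + β ^ 2 * vx q
              + pd2 (pd2 vx) q - vx q - 2 * pd2 vθ q,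
            pd1 (pd1 vθ) q + 2 * β * pd1 vθ q + β ^ 2 * vθ q
              + pd2 (pd2 vθ) q - vθ q + 2 * pd2 vx q) := by
  obtain ⟨hθpos, hπ⟩ := hθ₀
  have hOL := isOpen_layer θ₀
  have hOW := isOpen_wedge hπ
  have h0 : Set.EqOn (u ∘ psiW) (G β vx vθ) (layer θ₀) := fun p hp => by
    rw [Function.comp_apply, hu p hp, Orot_G]
  have hgW : ContDiffOn ℝ 2 gW (wedge θ₀) :=
    fun y hy => (contDiffAt_gW (wedge_pos2 hπ hy)).contDiffWithinAt
  have hmaps : wedge θ₀ ⊆ gW ⁻¹' (layer θ₀) := fun y hy => wedge_g_layer hπ hy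
  have hcomp : ContDiffOn ℝ 2 (G β vx vθ ∘ gW) (wedge θ₀) :=
    (contDiffOn_G hvx hvθ).comp hgW hmaps
  have hContu : ContDiffOn ℝ 2 u (wedge θ₀) := by
    refine hcomp.congr fun y hy => ?_
    calc u y = u (psiW (gW y)) := by rw [psi_g (wedge_pos2 hπ hy)]
      _ = (G β vx vθ ∘ gW) y := h0 (wedge_g_layer hπ hy)
  refine ⟨hContu, fun q hq => ?_⟩
  have hdvx : ∀ p ∈ layer θ₀, DifferentiableAt ℝ vx p := fun p hp => diffAt_of_c2 hOL hvx hp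
  have hdvθ : ∀ p ∈ layer θ₀, DifferentiableAt ℝ vθ p := fun p hp => diffAt_of_c2 hOL hvθ hp
  have hd1x : DifferentiableAt ℝ (pd1 vx) q := diff_fderiv_apply hOL hvx hq (1, 0)
  have hd2x : DifferentiableAt ℝ (pd2 vx) q := diff_fderiv_apply hOL hvx hq (0, 1)
  have hd1θ : DifferentiableAt ℝ (pd1 vθ) q := diff_fderiv_apply hOL hvθ hq (1, 0)
  have hd2θ : DifferentiableAt ℝ (pd2 vθ) q := diff_fderiv_apply hOL hvθ hq (0, 1)
  have S1 : ∀ p ∈ layer θ₀, fderiv ℝ (u ∘ psiW) p = fderiv ℝ (G β vx vθ) p := fun p hp =>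
    Filter.EventuallyEq.fderiv_eq (Filter.eventuallyEq_of_mem (hOL.mem_nhds hp) h0)
  have S2a : ∀ p ∈ layer θ₀, fderiv ℝ (u ∘ psiW) p (1, 0) = G β (Af β vx) (Af β vθ) p := by
    intro p hp
    rw [S1 p hp, (Gd β vx vθ p (hdvx p hp) (hdvθ p hp)).2.1]
    rfl
  have S2b : ∀ p ∈ layer θ₀, fderiv ℝ (u ∘ psiW) p (0, 1) = G β (Bf vx vθ) (Cf vx vθ) p := by
    intro p hp
    rw [S1 p hp, (Gd β vx vθ p (hdvx p hp) (hdvθ p hp)).2.2]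
    rfl
  have S3a : Set.EqOn ((fun z => fderiv ℝ u z (1, 0)) ∘ psiW)
      (G (β - 1) (M1f (Af β vx) (Bf vx vθ)) (M1f (Af β vθ) (Cf vx vθ))) (layer θ₀) := by
    intro p hp
    calc ((fun z => fderiv ℝ u z (1, 0)) ∘ psiW) p = fderiv ℝ u (psiW p) (1, 0) := rfl
      _ = _ := (key (diffAt_of_c2 hOW hContu (psi_mem_wedge hp))).1
      _ = (Real.exp (-p.1) * Real.cos p.2) • G β (Af β vx) (Af β vθ) p
          - (Real.exp (-p.1) * Real.sin p.2) • G β (Bf vx vθ) (Cf vx vθ) p := by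
          rw [S2a p hp, S2b p hp]
      _ = _ := G_M1 β _ _ _ _ p
  have S3b : Set.EqOn ((fun z => fderiv ℝ u z (0, 1)) ∘ psiW)
      (G (β - 1) (M2f (Af β vx) (Bf vx vθ)) (M2f (Af β vθ) (Cf vx vθ))) (layer θ₀) := by
    intro p hp
    calc ((fun z => fderiv ℝ u z (0, 1)) ∘ psiW) p = fderiv ℝ u (psiW p) (0, 1) := rfl
      _ = _ := (key (diffAt_of_c2 hOW hContu (psi_mem_wedge hp))).2
      _ = (Real.exp (-p.1) * Real.sin p.2) • G β (Af β vx) (Af β vθ) p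
          + (Real.exp (-p.1) * Real.cos p.2) • G β (Bf vx vθ) (Cf vx vθ) p := by
          rw [S2a p hp, S2b p hp]
      _ = _ := G_M2 β _ _ _ _ p
  have hAx := pdAf β (hdvx q hq) hd1x
  have hAθ := pdAf β (hdvθ q hq) hd1θ
  have hB := pdBf hd2x (hdvθ q hq)
  have hC := pdCf (hdvx q hq) hd2θ
  have hF1 := pdM1 hAx.1 hB.1
  have hG1 := pdM1 hAθ.1 hC.1
  have hF2 := pdM2 hAx.1 hB.1
  have hG2 := pdM2 hAθ.1 hC.1
  have hGd1 := Gd (β - 1) (M1f (Af β vx) (Bf vx vθ)) (M1f (Af β vθ) (Cf vx vθ)) q hF1.1 hG1.1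
  have hGd2 := Gd (β - 1) (M2f (Af β vx) (Bf vx vθ)) (M2f (Af β vθ) (Cf vx vθ)) q hF2.1 hG2.1
  have E1 : fderiv ℝ ((fun z => fderiv ℝ u z (1, 0)) ∘ psiW) q
      = fderiv ℝ (G (β - 1) (M1f (Af β vx) (Bf vx vθ)) (M1f (Af β vθ) (Cf vx vθ))) q :=
    (Filter.eventuallyEq_of_mem (hOL.mem_nhds hq) S3a).fderiv_eq
  have E2 : fderiv ℝ ((fun z => fderiv ℝ u z (0, 1)) ∘ psiW) q
      = fderiv ℝ (G (β - 1) (M2f (Af β vx) (Bf vx vθ)) (M2f (Af β vθ) (Cf vx vθ))) q :=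
    (Filter.eventuallyEq_of_mem (hOL.mem_nhds hq) S3b).fderiv_eq
  have K1 := key (h := fun z => fderiv ℝ u z (1, 0)) (q := q)
    (diff_fderiv_apply hOW hContu (psi_mem_wedge hq) (1, 0))
  have K2 := key (h := fun z => fderiv ℝ u z (0, 1)) (q := q)
    (diff_fderiv_apply hOW hContu (psi_mem_wedge hq) (0, 1))
  have hpy := Real.sin_sq_add_cos_sq q.2
  have he2 : Real.exp ((β - 2) * q.1) = Real.exp (-q.1) * Real.exp ((β - 1) * q.1) := by
    rw [← Real.exp_add]; ring_nf
  simp only [lap2]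
  rw [K1.1, K2.2, E1, E2, hGd1.2.1, hGd1.2.2, hGd2.2.1, hGd2.2.2,
      hF1.2.1, hF1.2.2, hG1.2.1, hG1.2.2, hF2.2.1, hF2.2.2, hG2.2.1, hG2.2.2,
      hAx.2.1, hAx.2.2, hAθ.2.1, hAθ.2.2, hB.2.1, hB.2.2, hC.2.1, hC.2.2, he2]
  simp only [M1f, M2f, Af, Bf, Cf, Orot]
  simp only [Prod.ext_iff, Prod.smul_def, smul_eq_mul, Prod.mk_add_mk, Prod.mk_sub_mk,
    Prod.fst_add, Prod.snd_add, Prod.fst_sub, Prod.snd_sub]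
  constructor
  · linear_combination (Real.exp (-q.1) * Real.exp ((β - 1) * q.1) *
      (Real.cos q.2 * (pd1 (pd1 vx) q + 2 * β * pd1 vx q + β ^ 2 * vx q
          + pd2 (pd2 vx) q - vx q - 2 * pd2 vθ q)
        - Real.sin q.2 * (pd1 (pd1 vθ) q + 2 * β * pd1 vθ q + β ^ 2 * vθ q
          + pd2 (pd2 vθ) q - vθ q + 2 * pd2 vx q))) * hpy
  · linear_combination (Real.exp (-q.1) * Real.exp ((β - 1) * q.1) *
      (Real.sin q.2 * (pd1 (pd1 vx) q + 2 * β * pd1 vx q + β ^ 2 * vx q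
          + pd2 (pd2 vx) q - vx q - 2 * pd2 vθ q)
        + Real.cos q.2 * (pd1 (pd1 vθ) q + 2 * β * pd1 vθ q + β ^ 2 * vθ q
          + pd2 (pd2 vθ) q - vθ q + 2 * pd2 vx q))) * hpy
end

section
/- Let θ₀ ∈ (0, π), β ∈ ℝ, k ∈ ℕ, μ := kπ/θ₀, and let φ : ℝ → ℝ be continuously differentiable. Define u : G → ℝ² by u(ψ(x, θ)) := e^{(β−2)x}·O(θ)·(φ(x)·cos(μθ), −φ(x)·sin(μθ)). Then for all (x, θ) ∈ ℝ×(0,θ₀): (div u)(ψ(x, θ)) = e^{(β−3)x}·((β − 1 − μ)·φ(x) + φ'(x))·cos(μθ). In particular, for k ∈ {0, 1, 2} this yields the coefficients (β−1+∂_x), (β−1−π/θ₀+∂_x), (β−1−2π/θ₀+∂_x) of the transformed divergence applied to the span of the first three eigenfunctions. -/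
open Real Set

/-- The divergence `div u = ∂₁u₁ + ∂₂u₂` of a planar vector field. -/
noncomputable def div2 (f : ℝ × ℝ → ℝ × ℝ) (y : ℝ × ℝ) : ℝ :=
  pd1 (fun z => (f z).1) y + pd2 (fun z => (f z).2) y

noncomputable def auxX (z : ℝ × ℝ) : ℝ := (1/2) * Real.log (z.1*z.1 + z.2*z.2)
noncomputable def auxT (z : ℝ × ℝ) : ℝ := π/2 - Real.arctan (z.1 * (z.2)⁻¹)

lemma auxT_mem (z : ℝ × ℝ) : auxT z ∈ Set.Ioo 0 π := by
  have h1 := Real.arctan_lt_pi_div_two (z.1 * (z.2)⁻¹)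
  have h2 := Real.neg_pi_div_two_lt_arctan (z.1 * (z.2)⁻¹)
  constructor <;> [skip; skip] <;> simp [auxT] <;> nlinarith [Real.pi_pos]

lemma auxX_psiW (q : ℝ × ℝ) : auxX (psiW q) = q.1 := by
  have h : (Real.exp q.1 * Real.cos q.2) * (Real.exp q.1 * Real.cos q.2)
      + (Real.exp q.1 * Real.sin q.2) * (Real.exp q.1 * Real.sin q.2)
      = Real.exp (q.1 + q.1) := by
    rw [Real.exp_add]; nlinarith [Real.sin_sq_add_cos_sq q.2]
  simp [auxX, psiW, h, Real.log_exp]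
  ring

lemma auxT_psiW (q : ℝ × ℝ) (h : q.2 ∈ Set.Ioo 0 π) : auxT (psiW q) = q.2 := by
  have hs : 0 < Real.sin q.2 := Real.sin_pos_of_pos_of_lt_pi h.1 h.2
  have he : Real.exp q.1 ≠ 0 := (Real.exp_pos _).ne'
  have hq : (Real.exp q.1 * Real.cos q.2) * (Real.exp q.1 * Real.sin q.2)⁻¹
      = Real.tan (π/2 - q.2) := by
    rw [Real.tan_eq_sin_div_cos, Real.sin_pi_div_two_sub, Real.cos_pi_div_two_sub]
    field_simp
  simp only [auxT, psiW, hq]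
  rw [Real.arctan_tan (by linarith [h.2]) (by linarith [h.1])]
  ring

lemma aux_psiW (z : ℝ × ℝ) (hz : 0 < z.2) : psiW (auxX z, auxT z) = z := by
  set r2 : ℝ := z.1*z.1 + z.2*z.2 with hr2def
  have hr2 : 0 < r2 := by nlinarith
  have hsr : 0 < Real.sqrt r2 := Real.sqrt_pos.mpr hr2
  have hexp : Real.exp (auxX z) = Real.sqrt r2 := by
    rw [auxX, show (1/2 : ℝ) * Real.log r2 = Real.log (Real.sqrt r2) by
      rw [Real.log_sqrt hr2.le]; ring]
    exact Real.exp_log hsr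
  set t0 : ℝ := z.1 * (z.2)⁻¹ with ht0
  have hsq : Real.sqrt (1 + t0^2) = Real.sqrt r2 / z.2 := by
    rw [eq_div_iff hz.ne', ← Real.sqrt_sq hz.le, ← Real.sqrt_mul (by positivity)]
    congr 1
    field_simp [ht0, hr2def]
    rw [ht0, hr2def, mul_pow, inv_pow, add_mul, inv_mul_cancel_right₀ (pow_ne_zero 2 hz.ne')]
    ring
  have hcos : Real.cos (auxT z) = z.1 / Real.sqrt r2 := by
    rw [auxT, Real.cos_pi_div_two_sub, Real.sin_arctan, hsq]
    field_simp [ht0]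
  have hsin : Real.sin (auxT z) = z.2 / Real.sqrt r2 := by
    rw [auxT, Real.sin_pi_div_two_sub, Real.cos_arctan, hsq]
    field_simp
  simp only [psiW, hexp, hcos, hsin]
  exact Prod.ext (by field_simp) (by field_simp)

noncomputable def auxV (β ν : ℝ) (φ : ℝ → ℝ) (z : ℝ × ℝ) : ℝ × ℝ :=
  (Real.exp ((β-2) * auxX z) * φ (auxX z) * Real.cos (ν * auxT z),
   -(Real.exp ((β-2) * auxX z) * φ (auxX z) * Real.sin (ν * auxT z)))


/-- The transformed divergence on the non-solenoidal eigenmodes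
`(φ(x) cos(μθ), −φ(x) sin(μθ))`, `μ = kπ/θ₀`:
`div u ∘ ψ = e^{(β−3)x} ((β−1−μ)φ + φ') cos(μθ)`. -/
theorem stmt12 (θ₀ β : ℝ) (hθ₀ : θ₀ ∈ Set.Ioo 0 π) (k : ℕ)
    (φ : ℝ → ℝ) (hφ : ContDiff ℝ 1 φ)
    (u : ℝ × ℝ → ℝ × ℝ)
    (hu : ∀ q ∈ layer θ₀,
      u (psiW q) = Real.exp ((β - 2) * q.1) • Orot q.2
        (φ q.1 * Real.cos (k * π / θ₀ * q.2), -φ q.1 * Real.sin (k * π / θ₀ * q.2))) :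
    ∀ q ∈ layer θ₀,
      div2 u (psiW q) =
        Real.exp ((β - 3) * q.1) * ((β - 1 - k * π / θ₀) * φ q.1 + deriv φ q.1) *
          Real.cos (k * π / θ₀ * q.2) := by
  intro q hq
  have ht : q.2 ∈ Set.Ioo 0 θ₀ := hq.2
  have htπ : q.2 ∈ Set.Ioo 0 π := ⟨ht.1, ht.2.trans hθ₀.2⟩
  set μ : ℝ := k * π / θ₀ with hμ
  set ν : ℝ := μ - 1 with hν
  -- the open set where u agrees with auxV
  set U : Set (ℝ × ℝ) := {z | 0 < z.2} ∩ auxT ⁻¹' Set.Iio θ₀ with hU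
  have hUopen : IsOpen U := by
    have hcont : ContinuousOn auxT {z : ℝ × ℝ | 0 < z.2} := by
      apply ContinuousOn.sub continuousOn_const
      apply Real.continuous_arctan.comp_continuousOn
      exact continuousOn_fst.mul (continuousOn_snd.inv₀ (fun z hz => ne_of_gt hz))
    exact hcont.isOpen_inter_preimage (isOpen_lt continuous_const continuous_snd) isOpen_Iio
  have hyU : psiW q ∈ U := by
    constructor
    · exact mul_pos (Real.exp_pos _) (Real.sin_pos_of_pos_of_lt_pi htπ.1 htπ.2)
    · simpa [Set.mem_preimage, auxT_psiW q htπ] using ht.2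
  -- u = auxV on U
  have huv : ∀ z ∈ U, u z = auxV β ν φ z := by
    intro z hz
    have hz2 : 0 < z.2 := hz.1
    have hp : (auxX z, auxT z) ∈ layer θ₀ :=
      ⟨Set.mem_univ _, ⟨(auxT_mem z).1, hz.2⟩⟩
    have := hu _ hp
    rw [aux_psiW z hz2] at this
    rw [this]
    simp only [auxV]
    set a := auxX z
    set b := auxT z
    have h1 : ν * b = μ * b - b := by rw [hν]; ring
    refine Prod.ext ?_ ?_ <;>
      simp only [auxV, Orot, Prod.smul_def, smul_eq_mul, h1, Real.cos_sub, Real.sin_sub] <;>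
      ring
  have heq : u =ᶠ[nhds (psiW q)] auxV β ν φ :=
    Filter.eventuallyEq_of_mem (hUopen.mem_nhds hyU) huv
  -- replace u by auxV in the divergence
  have hdiv : div2 u (psiW q) = div2 (auxV β ν φ) (psiW q) := by
    have heq1 : (fun z => (u z).1) =ᶠ[nhds (psiW q)] (fun z => (auxV β ν φ z).1) :=
      heq.mono fun z hz => congrArg Prod.fst hz
    have heq2 : (fun z => (u z).2) =ᶠ[nhds (psiW q)] (fun z => (auxV β ν φ z).2) :=
      heq.mono fun z hz => congrArg Prod.snd hz
    unfold div2 pd1 pd2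
    rw [heq1.fderiv_eq, heq2.fderiv_eq]
  rw [hdiv]
  -- now compute the divergence of auxV at y
  set y : ℝ × ℝ := psiW q with hy
  have hy2 : 0 < y.2 := hyU.1
  have hy2ne : y.2 ≠ 0 := hy2.ne'
  have hr2pos : 0 < y.1*y.1 + y.2*y.2 := by nlinarith
  have hr2ne : y.1*y.1 + y.2*y.2 ≠ 0 := hr2pos.ne'
  have h1 : HasFDerivAt (fun z : ℝ × ℝ => z.1) (ContinuousLinearMap.fst ℝ ℝ ℝ) y :=
    hasFDerivAt_fst
  have h2 : HasFDerivAt (fun z : ℝ × ℝ => z.2) (ContinuousLinearMap.snd ℝ ℝ ℝ) y :=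
    hasFDerivAt_snd
  have hr2 : HasFDerivAt (fun z : ℝ × ℝ => z.1*z.1 + z.2*z.2) _ y := (h1.mul h1).add (h2.mul h2)
  have hX : HasFDerivAt auxX _ y := (hr2.log hr2ne).const_mul (1/2)
  have hinv : HasFDerivAt (fun z : ℝ × ℝ => (z.2)⁻¹) _ y :=
    (hasDerivAt_inv hy2ne).comp_hasFDerivAt y h2
  have hq0 : HasFDerivAt (fun z : ℝ × ℝ => z.1 * (z.2)⁻¹) _ y := h1.mul hinv
  have hT : HasFDerivAt auxT _ y := hq0.arctan.const_sub (π/2)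
  have hE : HasFDerivAt (fun z : ℝ × ℝ => Real.exp ((β-2) * auxX z)) _ y :=
    (hX.const_mul (β-2)).exp
  have hdφ : HasDerivAt φ (deriv φ (auxX y)) (auxX y) :=
    ((hφ.differentiable (by norm_num)) (auxX y)).hasDerivAt
  have hP : HasFDerivAt (fun z : ℝ × ℝ => φ (auxX z)) _ y := hdφ.comp_hasFDerivAt y hX
  have hC : HasFDerivAt (fun z : ℝ × ℝ => Real.cos (ν * auxT z)) _ y := (hT.const_mul ν).cos
  have hS : HasFDerivAt (fun z : ℝ × ℝ => Real.sin (ν * auxT z)) _ y := (hT.const_mul ν).sin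
  have hV1 : HasFDerivAt (fun z : ℝ × ℝ => (auxV β ν φ z).1) _ y := (hE.mul hP).mul hC
  have hV2 : HasFDerivAt (fun z : ℝ × ℝ => (auxV β ν φ z).2) _ y := ((hE.mul hP).mul hS).neg
  unfold div2 pd1 pd2
  rw [hV1.fderiv, hV2.fderiv]
  have hXy : auxX y = q.1 := auxX_psiW q
  have hTy : auxT y = q.2 := auxT_psiW q htπ
  simp only [Pi.mul_apply, ContinuousLinearMap.add_apply, ContinuousLinearMap.smul_apply,
    ContinuousLinearMap.neg_apply, ContinuousLinearMap.coe_fst', ContinuousLinearMap.coe_snd',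
    smul_eq_mul, hXy, hTy]
  have hμν : μ * q.2 = ν * q.2 + q.2 := by rw [hν]; ring
  have hβx : (β - 2) * q.1 = (β - 3) * q.1 + q.1 := by ring
  rw [hμν, Real.cos_add, hβx, Real.exp_add]
  simp only [hy, psiW]
  set s := Real.sin q.2 with hsdef
  set c := Real.cos q.2 with hcdef
  set E := Real.exp q.1 with hEdef
  have hpy : s ^ 2 + c ^ 2 = 1 := Real.sin_sq_add_cos_sq q.2
  have hE : E ≠ 0 := Real.exp_ne_zero q.1
  have hs : s ≠ 0 := (Real.sin_pos_of_pos_of_lt_pi htπ.1 htπ.2).ne'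
  have hr : E*c*(E*c) + E*s*(E*s) = E*E := by nlinarith [hpy]
  rw [hr]
  have harg : E*c*(E*s)⁻¹ = c * s⁻¹ := by
    field_simp
  rw [harg]
  have h1p : (1:ℝ) + (c*s⁻¹)^2 = (s^2)⁻¹ := by
    field_simp
    linear_combination hpy
  rw [h1p]
  rw [hν]
  field_simp
  ring
end
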